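/- Let X be a real-valued square-integrable random variable and let α, β > 0. A real number t minimizes the expectile-loss risk φ(t) = E[α·(max(X − t, 0))² + β·(max(t − X, 0))²] over ℝ if and only if t satisfies the (α,β)-expectile equation α·H(t) = β·G(t), where G(t) = E[max(t − X, 0)] and H(t) = E[max(X − t, 0)]. -/

import Mathlib

open MeasureTheory

private lemma max_mul_max_neg (a : ℝ) : max a 0 * max (-a) 0 = 0 := by
  rcases le_total a 0 with h | h
  · rw [max_eq_right h]; ring
  · rw [max_eq_right (by linarith : -a ≤ 0)]; ring

private lemma max_sub_max_neg (a : ℝ) : max a 0 - max (-a) 0 = a := by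
  rcases le_total a 0 with h | h
  · rw [max_eq_right h, max_eq_left (by linarith : 0 ≤ -a)]; ring
  · rw [max_eq_left h, max_eq_right (by linarith : -a ≤ 0)]; ring

private lemma aux_lower (a b A B A' B' : ℝ) (ha : 0 ≤ a) (hb : 0 ≤ b)
    (hA : 0 ≤ A) (hB : 0 ≤ B) (hA' : 0 ≤ A') (hB' : 0 ≤ B')
    (hAB : A * B = 0) (hA'B' : A' * B' = 0) :
    a * A ^ 2 + b * B ^ 2 + (2 * b * B - 2 * a * A) * ((A - B) - (A' - B'))
      ≤ a * A' ^ 2 + b * B' ^ 2 := by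
  have e1 : a * (A * B) = 0 := by rw [hAB]; ring
  have e2 : b * (A * B) = 0 := by rw [hAB]; ring
  nlinarith [mul_nonneg ha (sq_nonneg (A' - A)), mul_nonneg hb (sq_nonneg (B' - B)),
    mul_nonneg (mul_nonneg ha hA) hB', mul_nonneg (mul_nonneg hb hA') hB, e1, e2]

private lemma aux_upper (a b M A B A' B' : ℝ) (ha : 0 ≤ a) (hb : 0 ≤ b)
    (hMa : a ≤ M) (hMb : b ≤ M)
    (hA : 0 ≤ A) (hB : 0 ≤ B) (hA' : 0 ≤ A') (hB' : 0 ≤ B')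
    (hAB : A * B = 0) (hA'B' : A' * B' = 0) :
    a * A' ^ 2 + b * B' ^ 2
      ≤ a * A ^ 2 + b * B ^ 2 + (2 * b * B - 2 * a * A) * ((A - B) - (A' - B'))
        + M * ((A - B) - (A' - B')) ^ 2 := by
  have e1 : a * (A * B) = 0 := by rw [hAB]; ring
  have e2 : b * (A * B) = 0 := by rw [hAB]; ring
  have e3 : M * (A * B) = 0 := by rw [hAB]; ring
  have e4 : M * (A' * B') = 0 := by rw [hA'B']; ring
  nlinarith [mul_nonneg (by linarith : (0:ℝ) ≤ M - a) (sq_nonneg (A' - A)),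
    mul_nonneg (by linarith : (0:ℝ) ≤ M - b) (sq_nonneg (B' - B)),
    mul_nonneg (mul_nonneg (by linarith : (0:ℝ) ≤ M - a) hA) hB',
    mul_nonneg (mul_nonneg (by linarith : (0:ℝ) ≤ M - b) hA') hB,
    e1, e2, e3, e4]

private lemma expectile_pt_lower (α β x t s : ℝ) (hα : 0 ≤ α) (hβ : 0 ≤ β) :
    α * (max (x - t) 0) ^ 2 + β * (max (t - x) 0) ^ 2 +
      (2 * β * max (t - x) 0 - 2 * α * max (x - t) 0) * (s - t)
    ≤ α * (max (x - s) 0) ^ 2 + β * (max (s - x) 0) ^ 2 := by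
  have hAB : max (x - t) 0 * max (t - x) 0 = 0 := by
    have := max_mul_max_neg (x - t); rwa [neg_sub] at this
  have hA'B' : max (x - s) 0 * max (s - x) 0 = 0 := by
    have := max_mul_max_neg (x - s); rwa [neg_sub] at this
  have hst : max (x - t) 0 - max (t - x) 0 = x - t := by
    have := max_sub_max_neg (x - t); rwa [neg_sub] at this
  have hss : max (x - s) 0 - max (s - x) 0 = x - s := by
    have := max_sub_max_neg (x - s); rwa [neg_sub] at this
  have key : s - t = (max (x - t) 0 - max (t - x) 0) - (max (x - s) 0 - max (s - x) 0) := by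
    rw [hst, hss]; ring
  rw [key]
  exact aux_lower α β _ _ _ _ hα hβ (le_max_right _ _) (le_max_right _ _)
    (le_max_right _ _) (le_max_right _ _) hAB hA'B'

private lemma expectile_pt_upper (α β x t s : ℝ) (hα : 0 ≤ α) (hβ : 0 ≤ β) :
    α * (max (x - s) 0) ^ 2 + β * (max (s - x) 0) ^ 2
    ≤ α * (max (x - t) 0) ^ 2 + β * (max (t - x) 0) ^ 2 +
      (2 * β * max (t - x) 0 - 2 * α * max (x - t) 0) * (s - t) +
      max α β * (s - t) ^ 2 := by
  have hAB : max (x - t) 0 * max (t - x) 0 = 0 := by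
    have := max_mul_max_neg (x - t); rwa [neg_sub] at this
  have hA'B' : max (x - s) 0 * max (s - x) 0 = 0 := by
    have := max_mul_max_neg (x - s); rwa [neg_sub] at this
  have hst : max (x - t) 0 - max (t - x) 0 = x - t := by
    have := max_sub_max_neg (x - t); rwa [neg_sub] at this
  have hss : max (x - s) 0 - max (s - x) 0 = x - s := by
    have := max_sub_max_neg (x - s); rwa [neg_sub] at this
  have key : s - t = (max (x - t) 0 - max (t - x) 0) - (max (x - s) 0 - max (s - x) 0) := by
    rw [hst, hss]; ring
  rw [key]
  exact aux_upper α β (max α β) _ _ _ _ hα hβ (le_max_left _ _) (le_max_right _ _)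
    (le_max_right _ _) (le_max_right _ _) (le_max_right _ _) (le_max_right _ _) hAB hA'B'

/-- t minimizes the expectile-loss risk φ iff α·H(t) = β·G(t). -/
theorem expectile_risk_min_iff
    {Ω : Type*} [MeasurableSpace Ω] (μ : Measure Ω) [IsProbabilityMeasure μ]
    (X : Ω → ℝ) (hX : MemLp X 2 μ)
    (α β : ℝ) (hα : 0 < α) (hβ : 0 < β)
    (G H φ : ℝ → ℝ)
    (hG : ∀ t, G t = ∫ ω, max (t - X ω) 0 ∂μ)
    (hH : ∀ t, H t = ∫ ω, max (X ω - t) 0 ∂μ)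
    (hφ : ∀ t, φ t = ∫ ω, (α * (max (X ω - t) 0) ^ 2 + β * (max (t - X ω) 0) ^ 2) ∂μ) :
    ∀ t : ℝ, (∀ s : ℝ, φ t ≤ φ s) ↔ α * H t = β * G t := by
  have hXm : AEMeasurable X μ := hX.aestronglyMeasurable.aemeasurable
  have hXint : Integrable X μ := hX.integrable one_le_two
  have measA : ∀ r : ℝ, AEStronglyMeasurable (fun ω => max (X ω - r) 0) μ := fun r =>
    ((hXm.sub aemeasurable_const).sup aemeasurable_const).aestronglyMeasurable
  have measB : ∀ r : ℝ, AEStronglyMeasurable (fun ω => max (r - X ω) 0) μ := fun r =>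
    ((aemeasurable_const.sub hXm).sup aemeasurable_const).aestronglyMeasurable
  have hsq : ∀ r : ℝ, Integrable (fun ω => (X ω - r) ^ 2) μ := fun r =>
    (hX.sub (memLp_const r)).integrable_sq
  have intA : ∀ r : ℝ, Integrable (fun ω => max (X ω - r) 0) μ := by
    intro r
    refine (hXint.sub (integrable_const r)).mono (measA r) (ae_of_all _ fun ω => ?_)
    simp only [Real.norm_eq_abs]
    rw [abs_of_nonneg (le_max_right _ _)]
    exact max_le (le_abs_self _) (abs_nonneg _)
  have intB : ∀ r : ℝ, Integrable (fun ω => max (r - X ω) 0) μ := by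
    intro r
    refine ((integrable_const r).sub hXint).mono (measB r) (ae_of_all _ fun ω => ?_)
    simp only [Real.norm_eq_abs]
    rw [abs_of_nonneg (le_max_right _ _)]
    exact max_le (le_abs_self _) (abs_nonneg _)
  have intA2 : ∀ r : ℝ, Integrable (fun ω => (max (X ω - r) 0) ^ 2) μ := by
    intro r
    refine (hsq r).mono ?_ (ae_of_all _ fun ω => ?_)
    · have := (measA r).mul (measA r)
      simpa [pow_two, Pi.mul_def] using this
    · simp only [Real.norm_eq_abs]
      rw [abs_of_nonneg (sq_nonneg _), abs_of_nonneg (sq_nonneg _)]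
      calc (max (X ω - r) 0) ^ 2 ≤ |X ω - r| ^ 2 :=
            pow_le_pow_left₀ (le_max_right _ _) (max_le (le_abs_self _) (abs_nonneg _)) 2
        _ = (X ω - r) ^ 2 := sq_abs _
  have intB2 : ∀ r : ℝ, Integrable (fun ω => (max (r - X ω) 0) ^ 2) μ := by
    intro r
    refine (hsq r).mono ?_ (ae_of_all _ fun ω => ?_)
    · have := (measB r).mul (measB r)
      simpa [pow_two, Pi.mul_def] using this
    · simp only [Real.norm_eq_abs]
      rw [abs_of_nonneg (sq_nonneg _), abs_of_nonneg (sq_nonneg _)]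
      calc (max (r - X ω) 0) ^ 2 ≤ |X ω - r| ^ 2 := by
            refine pow_le_pow_left₀ (le_max_right _ _) ?_ 2
            rw [abs_sub_comm]
            exact max_le (le_abs_self _) (abs_nonneg _)
        _ = (X ω - r) ^ 2 := sq_abs _
  have intφ : ∀ r : ℝ,
      Integrable (fun ω => α * (max (X ω - r) 0) ^ 2 + β * (max (r - X ω) 0) ^ 2) μ :=
    fun r => ((intA2 r).const_mul α).add ((intB2 r).const_mul β)
  have intD : ∀ t : ℝ, Integrable
      (fun ω => 2 * β * max (t - X ω) 0 - 2 * α * max (X ω - t) 0) μ :=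
    fun t => ((intB t).const_mul (2 * β)).sub ((intA t).const_mul (2 * α))
  have hDint : ∀ t : ℝ,
      (∫ ω, (2 * β * max (t - X ω) 0 - 2 * α * max (X ω - t) 0) ∂μ)
        = 2 * β * G t - 2 * α * H t := by
    intro t
    rw [integral_sub ((intB t).const_mul (2 * β)) ((intA t).const_mul (2 * α)),
      integral_const_mul, integral_const_mul, hG, hH]
  have key_low : ∀ t s : ℝ, φ t + (2 * β * G t - 2 * α * H t) * (s - t) ≤ φ s := by
    intro t s
    have hint : Integrable (fun ω =>
        (α * (max (X ω - t) 0) ^ 2 + β * (max (t - X ω) 0) ^ 2) +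
        (2 * β * max (t - X ω) 0 - 2 * α * max (X ω - t) 0) * (s - t)) μ :=
      (intφ t).add ((intD t).mul_const (s - t))
    have hmono := integral_mono hint (intφ s) (fun ω =>
      expectile_pt_lower α β (X ω) t s hα.le hβ.le)
    rw [integral_add (intφ t) ((intD t).mul_const (s - t)),
      integral_mul_const, hDint t] at hmono
    rw [hφ t, hφ s]
    exact hmono
  have key_up : ∀ t s : ℝ,
      φ s ≤ φ t + (2 * β * G t - 2 * α * H t) * (s - t) + max α β * (s - t) ^ 2 := by
    intro t s
    have hint1 : Integrable (fun ω =>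
        α * (max (X ω - t) 0) ^ 2 + β * (max (t - X ω) 0) ^ 2 +
        (2 * β * max (t - X ω) 0 - 2 * α * max (X ω - t) 0) * (s - t)) μ :=
      (intφ t).add ((intD t).mul_const (s - t))
    have hint : Integrable (fun ω =>
        α * (max (X ω - t) 0) ^ 2 + β * (max (t - X ω) 0) ^ 2 +
        (2 * β * max (t - X ω) 0 - 2 * α * max (X ω - t) 0) * (s - t) +
        max α β * (s - t) ^ 2) μ :=
      hint1.add (integrable_const _)
    have hmono := integral_mono (intφ s) hint (fun ω =>
      expectile_pt_upper α β (X ω) t s hα.le hβ.le)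
    rw [integral_add hint1 (integrable_const _),
      integral_add (intφ t) ((intD t).mul_const (s - t)),
      integral_mul_const, hDint t, integral_const, probReal_univ] at hmono
    rw [hφ t, hφ s]
    simpa using hmono
  intro t
  constructor
  · intro hmin
    obtain ⟨d, hd⟩ : ∃ d : ℝ, d = 2 * β * G t - 2 * α * H t := ⟨_, rfl⟩
    have hM : (0:ℝ) < max α β := lt_max_iff.2 (Or.inl hα)
    have h0 : ∀ s : ℝ, 0 ≤ d * (s - t) + max α β * (s - t) ^ 2 := by
      intro s
      have h1 := (hmin s).trans (key_up t s)
      rw [← hd] at h1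
      linarith
    have h1 := h0 (t - d / (2 * max α β))
    have h2 : d * ((t - d / (2 * max α β)) - t) + max α β * ((t - d / (2 * max α β)) - t) ^ 2
        = -(d ^ 2 / (4 * max α β)) := by
      field_simp
      ring
    rw [h2] at h1
    have h4 : (0:ℝ) < 4 * max α β := by linarith
    have h5 : d ^ 2 / (4 * max α β) ≤ 0 := by linarith
    have h6 : d ^ 2 ≤ 0 := by
      by_contra h
      push_neg at h
      have := div_pos h h4
      linarith
    have h7 : d ^ 2 = 0 := le_antisymm h6 (sq_nonneg d)
    have h8 : d = 0 := by
      have := sq_eq_zero_iff.mp h7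
      exact this
    rw [hd] at h8
    linarith
  · intro heq s
    have h0 : 2 * β * G t - 2 * α * H t = 0 := by linarith
    have h1 := key_low t s
    rw [h0, zero_mul, add_zero] at h1
    exact h1
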